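/- Let σ be a fixed permutation of [k], and let F_n(σ) be the number of involutions of [n] that contain σ as a subsequence. Then lim_{n→∞} F_n(σ)/t_n = 1/k!; i.e., the probability that a uniformly random involution of [n] contains σ as a subsequence is 1/k! + o(1) as n → ∞. -/

import Mathlib

open Filter

/-- `t_n`, the number of involutions of `[n]`. -/
noncomputable def tInv (n : ℕ) : ℕ := Nat.card {φ : Equiv.Perm (Fin n) // φ * φ = 1}

/-- A permutation `φ` of `[n]` contains the permutation `σ` of `[k]` as a subsequence:
the word obtained from `φ(1),…,φ(n)` by deleting all values greater than `k` is
`σ(1),…,σ(k)`; equivalently, there are positions `i₁ < ⋯ < i_k` with `φ(i_j) = σ(j)`. -/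
def ContainsPattern {n k : ℕ} (φ : Equiv.Perm (Fin n)) (σ : Equiv.Perm (Fin k)) : Prop :=
  ∃ g : Fin k → Fin n, StrictMono g ∧ ∀ j, (φ (g j) : ℕ) = (σ j : ℕ)

namespace IPP
open Equiv Finset


/-- number of involutions of a type -/
noncomputable def J (α : Type*) : ℕ := Nat.card {φ : Equiv.Perm α // φ * φ = 1}

lemma invo_apply {α : Type*} {φ : Perm α} (h : φ * φ = 1) (x : α) : φ (φ x) = x := by
  have := Equiv.ext_iff.mp h x
  simpa [Equiv.Perm.mul_apply] using this

lemma J_congr {α β : Type*} (e : α ≃ β) : J α = J β := by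
  apply Nat.card_congr
  refine ⟨fun φ => ⟨e.permCongr φ.1, ?_⟩, fun ψ => ⟨e.symm.permCongr ψ.1, ?_⟩, ?_, ?_⟩
  · ext x
    simp [Equiv.Perm.mul_apply, Equiv.permCongr_apply, invo_apply φ.2]
  · ext x
    simp [Equiv.Perm.mul_apply, Equiv.permCongr_apply, invo_apply ψ.2]
  · rintro ⟨φ, h⟩
    ext x
    simp [Equiv.permCongr_apply]
  · rintro ⟨ψ, h⟩
    ext x
    simp [Equiv.permCongr_apply]

lemma tInv_eq_J (n : ℕ) : tInv n = J (Fin n) := rfl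

lemma J_eq_of_card {α β : Type*} [Fintype α] [Fintype β]
    (h : Fintype.card α = Fintype.card β) : J α = J β := J_congr (Fintype.equivOfCardEq h)

lemma tInv_zero : tInv 0 = 1 := by
  rw [tInv]
  have : Subsingleton (Perm (Fin 0)) := inferInstance
  rw [Nat.card_eq_one_iff_unique]
  constructor
  · constructor
    rintro ⟨φ, _⟩ ⟨ψ, _⟩
    exact Subtype.ext (Subsingleton.elim _ _)
  · exact ⟨⟨1, by simp⟩⟩

lemma tInv_one : tInv 1 = 1 := by
  rw [tInv]
  rw [Nat.card_eq_one_iff_unique]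
  constructor
  · constructor
    rintro ⟨φ, _⟩ ⟨ψ, _⟩
    exact Subtype.ext (Subsingleton.elim _ _)
  · exact ⟨⟨1, by simp⟩⟩

variable {α : Type*} [Fintype α] [DecidableEq α]

lemma fiber_sum (a : α) :
    J α = ∑ b : α, Nat.card {φ : Perm α // φ * φ = 1 ∧ φ a = b} := by
  classical
  rw [J, ← Nat.card_congr (Equiv.sigmaFiberEquiv (fun φ : {φ : Perm α // φ * φ = 1} => φ.1 a))]
  rw [Nat.card_eq_fintype_card, Fintype.card_sigma]
  refine Finset.sum_congr rfl fun b _ => ?_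
  rw [← Nat.card_eq_fintype_card]
  exact Nat.card_congr
    (Equiv.subtypeSubtypeEquivSubtypeInter (fun φ : Perm α => φ * φ = 1) (fun φ => φ a = b))

lemma fix_fiber (a : α) :
    Nat.card {φ : Perm α // φ * φ = 1 ∧ φ a = a} = J {x : α // x ≠ a} := by
  classical
  apply Nat.card_congr
  have key : ∀ (φ : Perm α), φ * φ = 1 → φ a = a → ∀ x : α, x ≠ a ↔ φ x ≠ a := by
    intro φ h ha x
    constructor
    · intro hx hc
      exact hx (by rw [← ha] at hc; exact φ.injective hc)
    · intro hx hc
      exact hx (by rw [hc, ha])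
  refine ⟨fun φ => ⟨φ.1.subtypePerm (fun x => (key φ.1 φ.2.1 φ.2.2 x).symm), ?_⟩,
          fun ψ => ⟨Equiv.Perm.ofSubtype ψ.1, ?_, ?_⟩, ?_, ?_⟩
  · ext x
    simp [Equiv.Perm.mul_apply, Equiv.Perm.subtypePerm_apply, invo_apply φ.2.1]
  · ext x
    simp only [Equiv.Perm.mul_apply, Equiv.Perm.one_apply]
    by_cases hx : x ≠ a
    · rw [Equiv.Perm.ofSubtype_apply_of_mem ψ.1 hx,
          Equiv.Perm.ofSubtype_apply_of_mem ψ.1 (ψ.1 ⟨x, hx⟩).2]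
      exact congrArg Subtype.val (invo_apply ψ.2 ⟨x, hx⟩)
    · push_neg at hx
      rw [hx]
      have ea : Equiv.Perm.ofSubtype ψ.1 a = a :=
        Equiv.Perm.ofSubtype_apply_of_not_mem ψ.1 (fun h => h rfl)
      rw [ea, ea]
  · exact Equiv.Perm.ofSubtype_apply_of_not_mem ψ.1 (fun h => h rfl)
  · rintro ⟨φ, h1, h2⟩
    apply Subtype.ext
    ext x
    by_cases hx : x ≠ a
    · rw [Equiv.Perm.ofSubtype_apply_of_mem (φ.subtypePerm (p := fun y => y ≠ a) (fun x => (key φ h1 h2 x).symm)) hx,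
          Equiv.Perm.subtypePerm_apply]
    · push_neg at hx
      subst hx
      rw [Equiv.Perm.ofSubtype_apply_of_not_mem (φ.subtypePerm (fun x => (key φ h1 h2 x).symm)) (fun h => h rfl), h2]
  · rintro ⟨ψ, h⟩
    exact Subtype.ext (Equiv.Perm.subtypePerm_ofSubtype ψ)

lemma swap_fiber (a b : α) (hab : a ≠ b) :
    Nat.card {φ : Perm α // φ * φ = 1 ∧ φ a = b} = J {x : α // x ≠ a ∧ x ≠ b} := by
  classical
  apply Nat.card_congr
  have hba : ∀ (φ : Perm α), φ * φ = 1 → φ a = b → φ b = a := by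
    intro φ h hab'
    rw [← hab']
    exact invo_apply h a
  have key : ∀ (φ : Perm α), φ * φ = 1 → φ a = b →
      ∀ x : α, (x ≠ a ∧ x ≠ b) ↔ (φ x ≠ a ∧ φ x ≠ b) := by
    intro φ h ha x
    have hb := hba φ h ha
    constructor
    · rintro ⟨h1, h2⟩
      exact ⟨fun hc => h2 (φ.injective (by rw [hc, hb])),
             fun hc => h1 (φ.injective (by rw [hc, ha]))⟩
    · rintro ⟨h1, h2⟩
      exact ⟨fun hc => h2 (by rw [hc, ha]), fun hc => h1 (by rw [hc, hb])⟩
  refine ⟨fun φ => ⟨φ.1.subtypePerm (fun x => (key φ.1 φ.2.1 φ.2.2 x).symm), ?_⟩,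
          fun ψ => ⟨Equiv.Perm.ofSubtype ψ.1 * Equiv.swap a b, ?_, ?_⟩, ?_, ?_⟩
  · ext x
    simp [Equiv.Perm.mul_apply, Equiv.Perm.subtypePerm_apply, invo_apply φ.2.1]
  · have ea : Equiv.Perm.ofSubtype ψ.1 a = a :=
      Equiv.Perm.ofSubtype_apply_of_not_mem ψ.1 (fun h => h.1 rfl)
    have eb : Equiv.Perm.ofSubtype ψ.1 b = b :=
      Equiv.Perm.ofSubtype_apply_of_not_mem ψ.1 (fun h => h.2 rfl)
    ext x
    simp only [Equiv.Perm.mul_apply, Equiv.Perm.one_apply]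
    by_cases hxa : x = a
    · subst hxa
      rw [Equiv.swap_apply_left, eb, Equiv.swap_apply_right, ea]
    · by_cases hxb : x = b
      · subst hxb
        rw [Equiv.swap_apply_right, ea, Equiv.swap_apply_left, eb]
      · rw [Equiv.swap_apply_of_ne_of_ne hxa hxb,
            Equiv.Perm.ofSubtype_apply_of_mem ψ.1 (show x ≠ a ∧ x ≠ b from ⟨hxa, hxb⟩)]
        have hm := (ψ.1 ⟨x, ⟨hxa, hxb⟩⟩).2
        rw [Equiv.swap_apply_of_ne_of_ne hm.1 hm.2,
            Equiv.Perm.ofSubtype_apply_of_mem ψ.1 hm]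
        exact congrArg Subtype.val (invo_apply ψ.2 ⟨x, ⟨hxa, hxb⟩⟩)
  · simp only [Equiv.Perm.mul_apply, Equiv.swap_apply_left]
    exact Equiv.Perm.ofSubtype_apply_of_not_mem ψ.1 (fun h => h.2 rfl)
  · rintro ⟨φ, h1, h2⟩
    apply Subtype.ext
    ext x
    simp only [Equiv.Perm.mul_apply]
    have ea : Equiv.Perm.ofSubtype (φ.subtypePerm (p := fun y => y ≠ a ∧ y ≠ b) (fun x => (key φ h1 h2 x).symm)) a = a :=
      Equiv.Perm.ofSubtype_apply_of_not_mem _ (fun h => h.1 rfl)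
    have eb : Equiv.Perm.ofSubtype (φ.subtypePerm (p := fun y => y ≠ a ∧ y ≠ b) (fun x => (key φ h1 h2 x).symm)) b = b :=
      Equiv.Perm.ofSubtype_apply_of_not_mem _ (fun h => h.2 rfl)
    by_cases hxa : x = a
    · subst hxa
      rw [Equiv.swap_apply_left, eb, h2]
    · by_cases hxb : x = b
      · subst hxb
        rw [Equiv.swap_apply_right, ea, hba φ h1 h2]
      · rw [Equiv.swap_apply_of_ne_of_ne hxa hxb,
            Equiv.Perm.ofSubtype_apply_of_mem (φ.subtypePerm (p := fun y => y ≠ a ∧ y ≠ b) (fun x => (key φ h1 h2 x).symm))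
              (show x ≠ a ∧ x ≠ b from ⟨hxa, hxb⟩),
            Equiv.Perm.subtypePerm_apply]
  · rintro ⟨ψ, h⟩
    apply Subtype.ext
    ext x
    simp only [Equiv.Perm.subtypePerm_apply, Equiv.Perm.mul_apply]
    rw [Equiv.swap_apply_of_ne_of_ne x.2.1 x.2.2,
        Equiv.Perm.ofSubtype_apply_of_mem ψ x.2]
lemma card_ne {n : ℕ} (a : Fin (n + 1)) : Fintype.card {x : Fin (n + 1) // x ≠ a} = n := by
  classical
  rw [Fintype.card_subtype]
  rw [Finset.filter_ne' univ a, Finset.card_erase_of_mem (mem_univ a), card_univ,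
    Fintype.card_fin]
  omega

lemma card_ne_ne {n : ℕ} (a b : Fin (n + 2)) (hab : a ≠ b) :
    Fintype.card {x : Fin (n + 2) // x ≠ a ∧ x ≠ b} = n := by
  classical
  rw [Fintype.card_subtype]
  have : (univ.filter fun x : Fin (n+2) => x ≠ a ∧ x ≠ b) = (univ.erase a).erase b := by
    ext x
    simp [mem_erase, and_comm]
  rw [this, Finset.card_erase_of_mem (by simp [mem_erase, hab.symm]),
      Finset.card_erase_of_mem (mem_univ a), card_univ, Fintype.card_fin]
  omega

lemma J_ne {n : ℕ} (a : Fin (n + 1)) : J {x : Fin (n + 1) // x ≠ a} = tInv n := by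
  rw [tInv_eq_J]
  exact J_eq_of_card (by rw [card_ne, Fintype.card_fin])

lemma J_ne_ne {n : ℕ} (a b : Fin (n + 2)) (hab : a ≠ b) :
    J {x : Fin (n + 2) // x ≠ a ∧ x ≠ b} = tInv n := by
  rw [tInv_eq_J]
  exact J_eq_of_card (by rw [card_ne_ne a b hab, Fintype.card_fin])

lemma tInv_rec (n : ℕ) : tInv (n + 2) = tInv (n + 1) + (n + 1) * tInv n := by
  classical
  rw [tInv_eq_J, fiber_sum (0 : Fin (n + 2))]
  rw [← Finset.sum_erase_add _ _ (mem_univ (0 : Fin (n + 2)))]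
  have h1 : Nat.card {φ : Perm (Fin (n+2)) // φ * φ = 1 ∧ φ 0 = 0} = tInv (n + 1) := by
    rw [fix_fiber]
    exact J_ne 0
  have h2 : ∀ b ∈ (univ : Finset (Fin (n+2))).erase 0,
      Nat.card {φ : Perm (Fin (n+2)) // φ * φ = 1 ∧ φ 0 = b} = tInv n := by
    intro b hb
    rw [swap_fiber 0 b (Ne.symm (Finset.ne_of_mem_erase hb))]
    exact J_ne_ne 0 b (Ne.symm (Finset.ne_of_mem_erase hb))
  rw [Finset.sum_congr rfl h2, Finset.sum_const, h1,
      Finset.card_erase_of_mem (mem_univ _), card_univ, Fintype.card_fin]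
  simp [add_comm, mul_comm]

lemma tInv_mono : Monotone tInv := by
  apply monotone_nat_of_le_succ
  intro n
  match n with
  | 0 => rw [tInv_zero, tInv_one]
  | Nat.succ m => rw [tInv_rec m]; exact Nat.le_add_right _ _

lemma tInv_pos (n : ℕ) : 0 < tInv n := by
  have := tInv_mono (Nat.zero_le n)
  rw [tInv_zero] at this
  omega

lemma sqrt_bound : ∀ n : ℕ, Real.sqrt (n + 1) * tInv n ≤ 2 * tInv (n + 1) := by
  intro n
  induction n using Nat.strong_induction_on with
  | _ n IH =>
    match n with
    | 0 =>
      rw [tInv_zero, tInv_one]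
      norm_num
    | 1 =>
      rw [tInv_one, tInv_rec 0, tInv_zero, tInv_one]
      norm_num
      have h2 : (Real.sqrt 2) ^ 2 = 2 := Real.sq_sqrt (by norm_num)
      nlinarith [Real.sqrt_nonneg 2, h2]
    | (m + 2) =>
      have hIH := IH m (by omega)
      set a : ℝ := (tInv m : ℝ) with ha
      set b : ℝ := (tInv (m + 1) : ℝ) with hb
      set c : ℝ := (tInv (m + 2) : ℝ) with hc
      set d : ℝ := (tInv (m + 3) : ℝ) with hd
      have hrec1 : c = b + (m + 1) * a := by
        rw [hc, hb, ha, tInv_rec m]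
        push_cast
        ring
      have hrec2 : d = c + (m + 2) * b := by
        rw [hd, hc, hb, tInv_rec (m + 1)]
        push_cast
        ring
      set u : ℝ := Real.sqrt (m + 1) with hu
      set s : ℝ := Real.sqrt (m + 3) with hs
      have hu2 : u ^ 2 = m + 1 := Real.sq_sqrt (by positivity)
      have hs2 : s ^ 2 = m + 3 := Real.sq_sqrt (by positivity)
      have hu0 : 0 ≤ u := Real.sqrt_nonneg _
      have hs0 : 0 ≤ s := Real.sqrt_nonneg _
      have hu1 : 1 ≤ u := by nlinarith [hu2, hu0]
      have hb0 : (0:ℝ) ≤ b := by positivity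
      have hc0 : (0:ℝ) ≤ c := by positivity
      have hbc : b ≤ c := by
        rw [hb, hc]
        exact_mod_cast tInv_mono (by omega : m + 1 ≤ m + 2)
      have hcb : c ≤ (1 + 2 * u) * b := by
        have : (m + 1 : ℝ) * a = u * (u * a) := by rw [← mul_assoc, ← sq, hu2]
        nlinarith [hIH]
      have hkey : s * (1 + 2 * u) ≤ 2 * u ^ 2 + 4 * u + 4 := by
        have h2 : (s * (1 + 2 * u)) ^ 2 ≤ (2 * u ^ 2 + 4 * u + 4) ^ 2 := by
          nlinarith [hu2, hs2, hu0, sq_nonneg u, sq_nonneg (u - 1), sq_nonneg (u + 1)]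
        exact le_of_pow_le_pow_left₀ two_ne_zero (by positivity) h2
      -- goal : √(m+3) * tInv (m+2) ≤ 2 * tInv (m+3)
      rw [show ((m + 2 : ℕ) : ℝ) + 1 = (m : ℝ) + 3 from by push_cast; ring]
      show s * c ≤ 2 * d
      by_cases hsle : s ≤ 2
      · nlinarith [hrec2, hb0, hc0]
      · push_neg at hsle
        have h1 : (s - 2) * c ≤ (s - 2) * ((1 + 2 * u) * b) :=
          mul_le_mul_of_nonneg_left hcb (by linarith)
        have h2 : (2 * u ^ 2 + 4 * u + 4 - s * (1 + 2 * u)) * b ≥ 0 :=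
          mul_nonneg (by linarith) hb0
        nlinarith [hrec2, hu2]
variable {n k : ℕ}

def smallSet (k : ℕ) {n : ℕ} (φ : Perm (Fin n)) : Finset (Fin n) :=
  univ.filter fun i => (φ i : ℕ) < k

lemma card_smallSet (hkn : k ≤ n) (φ : Perm (Fin n)) : (smallSet k φ).card = k := by
  have himg : smallSet k φ
      = Finset.image (fun j : Fin k => φ.symm (Fin.castLE hkn j)) univ := by
    ext i
    simp only [smallSet, mem_filter, mem_univ, true_and, mem_image]
    constructor
    · intro h
      refine ⟨⟨(φ i : ℕ), h⟩, ?_⟩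
      have : Fin.castLE hkn ⟨(φ i : ℕ), h⟩ = φ i := by
        apply Fin.ext
        simp
      rw [this, Equiv.symm_apply_apply]
    · rintro ⟨j, rfl⟩
      simp
  rw [himg, Finset.card_image_of_injective _
    (fun a b h => Fin.castLE_injective hkn (φ.symm.injective h)), card_univ, Fintype.card_fin]

lemma patEmb_mem (hkn : k ≤ n) (φ : Perm (Fin n)) (j : Fin k) :
    (φ ((smallSet k φ).orderEmbOfFin (card_smallSet hkn φ) j) : ℕ) < k := by
  have h := Finset.orderEmbOfFin_mem (smallSet k φ) (card_smallSet hkn φ) j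
  simp only [smallSet, mem_filter, mem_univ, true_and] at h
  exact h

noncomputable def patternPerm (hkn : k ≤ n) (φ : Perm (Fin n)) : Perm (Fin k) :=
  Equiv.ofBijective
    (fun j => ⟨(φ ((smallSet k φ).orderEmbOfFin (card_smallSet hkn φ) j) : ℕ),
      patEmb_mem hkn φ j⟩)
    (by
      apply Finite.injective_iff_bijective.mp
      intro j1 j2 h
      have hval := congrArg Fin.val h
      simp only at hval
      have : φ ((smallSet k φ).orderEmbOfFin (card_smallSet hkn φ) j1)
          = φ ((smallSet k φ).orderEmbOfFin (card_smallSet hkn φ) j2) := Fin.ext hval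
      exact ((smallSet k φ).orderEmbOfFin (card_smallSet hkn φ)).injective (φ.injective this))

lemma patternPerm_val (hkn : k ≤ n) (φ : Perm (Fin n)) (j : Fin k) :
    ((patternPerm hkn φ) j : ℕ)
      = (φ ((smallSet k φ).orderEmbOfFin (card_smallSet hkn φ) j) : ℕ) := rfl

lemma contains_iff (hkn : k ≤ n) (φ : Perm (Fin n)) (σ : Perm (Fin k)) :
    ContainsPattern φ σ ↔ patternPerm hkn φ = σ := by
  constructor
  · rintro ⟨g, hg, hv⟩
    have hmem : ∀ j, g j ∈ smallSet k φ := by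
      intro j
      simp only [smallSet, mem_filter, mem_univ, true_and]
      rw [hv j]
      exact (σ j).isLt
    have hgeq : g = ⇑((smallSet k φ).orderEmbOfFin (card_smallSet hkn φ)) :=
      Finset.orderEmbOfFin_unique (card_smallSet hkn φ) hmem hg
    apply Equiv.ext
    intro j
    apply Fin.ext
    rw [patternPerm_val hkn φ j, ← congrFun hgeq j, hv j]
  · rintro rfl
    exact ⟨⇑((smallSet k φ).orderEmbOfFin (card_smallSet hkn φ)),
      ((smallSet k φ).orderEmbOfFin (card_smallSet hkn φ)).strictMono,
      fun j => rfl⟩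

/-- positions `< k` -/
def Big (k : ℕ) {n : ℕ} (φ : Perm (Fin n)) : Prop :=
  ∀ x : Fin n, (x : ℕ) < k → k ≤ (φ x : ℕ)

def smallEquiv (hkn : k ≤ n) : Fin k ≃ {x : Fin n // (x : ℕ) < k} where
  toFun j := ⟨Fin.castLE hkn j, by simp⟩
  invFun x := ⟨(x.1 : ℕ), x.2⟩
  left_inv j := by apply Fin.ext; simp
  right_inv x := by apply Subtype.ext; apply Fin.ext; simp

noncomputable def ext' (hkn : k ≤ n) (τ : Perm (Fin k)) : Perm (Fin n) :=
  τ.extendDomain (smallEquiv hkn)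

lemma ext'_small (hkn : k ≤ n) (τ : Perm (Fin k)) (x : Fin n) (h : (x : ℕ) < k) :
    ((ext' hkn τ) x : ℕ) = (τ ⟨(x : ℕ), h⟩ : ℕ) := by
  rw [ext', Equiv.Perm.extendDomain_apply_subtype τ (smallEquiv hkn) h]
  simp [smallEquiv]

lemma ext'_small_lt (hkn : k ≤ n) (τ : Perm (Fin k)) (x : Fin n) (h : (x : ℕ) < k) :
    ((ext' hkn τ) x : ℕ) < k := by
  rw [ext'_small hkn τ x h]
  exact (τ _).isLt

lemma ext'_big (hkn : k ≤ n) (τ : Perm (Fin k)) (x : Fin n) (h : ¬ (x : ℕ) < k) :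
    (ext' hkn τ) x = x :=
  Equiv.Perm.extendDomain_apply_not_subtype τ (smallEquiv hkn) h

lemma ext'_inv (hkn : k ≤ n) (τ : Perm (Fin k)) :
    (ext' hkn τ)⁻¹ = ext' hkn τ⁻¹ :=
  Equiv.Perm.extendDomain_inv τ (smallEquiv hkn)

lemma conj_preserves (hkn : k ≤ n) (τ σ : Perm (Fin k)) (φ : Perm (Fin n))
    (h1 : φ * φ = 1) (hE : Big k φ) (hC : ContainsPattern φ σ) :
    (ext' hkn τ * φ * (ext' hkn τ)⁻¹) * (ext' hkn τ * φ * (ext' hkn τ)⁻¹) = 1 ∧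
    Big k (ext' hkn τ * φ * (ext' hkn τ)⁻¹) ∧
    ContainsPattern (ext' hkn τ * φ * (ext' hkn τ)⁻¹) (τ * σ) := by
  set T := ext' hkn τ with hT
  refine ⟨?_, ?_, ?_⟩
  · ext x
    simp only [Equiv.Perm.mul_apply, Equiv.Perm.one_apply,
      (show ∀ y, T⁻¹ (T y) = y from fun y => T.symm_apply_apply y)]
    rw [invo_apply h1, (show T (T⁻¹ x) = x from T.apply_symm_apply x)]
  · intro x hx
    simp only [Equiv.Perm.mul_apply]
    rw [ext'_inv hkn τ]
    have hy : ((ext' hkn τ⁻¹) x : ℕ) < k := ext'_small_lt hkn τ⁻¹ x hx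
    have hφy : k ≤ (φ ((ext' hkn τ⁻¹) x) : ℕ) := hE _ hy
    rw [hT, ext'_big hkn τ _ (by omega)]
    exact hφy
  · obtain ⟨g, hg, hv⟩ := hC
    refine ⟨g, hg, fun j => ?_⟩
    have hval : (φ (g j) : ℕ) < k := by rw [hv j]; exact (σ j).isLt
    have hpos : ¬ ((g j : ℕ) < k) := by
      intro hc
      have := hE (g j) hc
      omega
    simp only [Equiv.Perm.mul_apply]
    rw [ext'_inv hkn τ, ext'_big hkn τ⁻¹ _ hpos, hT, ext'_small hkn τ _ hval]
    have : (⟨(φ (g j) : ℕ), hval⟩ : Fin k) = σ j := Fin.ext (hv j)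
    rw [this]

lemma conj_card (hkn : k ≤ n) (σ₁ σ₂ : Perm (Fin k)) :
    Nat.card {φ : Perm (Fin n) // φ * φ = 1 ∧ Big k φ ∧ ContainsPattern φ σ₁}
      = Nat.card {φ : Perm (Fin n) // φ * φ = 1 ∧ Big k φ ∧ ContainsPattern φ σ₂} := by
  set τ := σ₂ * σ₁⁻¹ with hτ
  apply Nat.card_congr
  have h₁ : τ * σ₁ = σ₂ := by rw [hτ]; group
  have h₂ : τ⁻¹ * σ₂ = σ₁ := by rw [hτ]; group
  refine ⟨fun φ => ⟨ext' hkn τ * φ.1 * (ext' hkn τ)⁻¹, ?_⟩,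
          fun ψ => ⟨ext' hkn τ⁻¹ * ψ.1 * (ext' hkn τ⁻¹)⁻¹, ?_⟩, ?_, ?_⟩
  · obtain ⟨hi, hb, hc⟩ := φ.2
    have := conj_preserves hkn τ σ₁ φ.1 hi hb hc
    rw [h₁] at this
    exact this
  · obtain ⟨hi, hb, hc⟩ := ψ.2
    have := conj_preserves hkn τ⁻¹ σ₂ ψ.1 hi hb hc
    rw [h₂] at this
    exact this
  · rintro ⟨φ, h⟩
    apply Subtype.ext
    simp only
    rw [← ext'_inv hkn τ]
    group
  · rintro ⟨ψ, h⟩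
    apply Subtype.ext
    simp only
    rw [← ext'_inv hkn τ]
    group


lemma card_iff {α : Type*} {p q : α → Prop} (h : ∀ x, p x ↔ q x) :
    Nat.card {x // p x} = Nat.card {x // q x} :=
  Nat.card_congr (Equiv.subtypeEquivRight h)

lemma card_mono {α : Type*} [Finite α] {p q : α → Prop} (h : ∀ x, p x → q x) :
    Nat.card {x // p x} ≤ Nat.card {x // q x} :=
  Nat.card_le_card_of_injective (fun x => ⟨x.1, h x.1 x.2⟩) (by
    intro a b hab
    apply Subtype.ext
    simpa [Subtype.ext_iff] using hab)

lemma card_split {α : Type*} [Finite α] (p q : α → Prop) :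
    Nat.card {x // p x}
      = Nat.card {x // p x ∧ q x} + Nat.card {x // p x ∧ ¬ q x} := by
  classical
  rw [← Nat.card_congr (Equiv.sumCompl (fun y : {x // p x} => q y.1)), Nat.card_sum]
  congr 1
  · exact Nat.card_congr (Equiv.subtypeSubtypeEquivSubtypeInter p q)
  · exact Nat.card_congr (Equiv.subtypeSubtypeEquivSubtypeInter p (fun x => ¬ q x))

lemma bigE_partition (hkn : k ≤ n) :
    Nat.card {φ : Perm (Fin n) // φ * φ = 1 ∧ Big k φ}
      = ∑ σ : Perm (Fin k),
          Nat.card {φ : Perm (Fin n) // φ * φ = 1 ∧ Big k φ ∧ ContainsPattern φ σ} := by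
  classical
  rw [← Nat.card_congr (Equiv.sigmaFiberEquiv
    (fun φ : {φ : Perm (Fin n) // φ * φ = 1 ∧ Big k φ} => patternPerm hkn φ.1))]
  rw [Nat.card_eq_fintype_card, Fintype.card_sigma]
  refine Finset.sum_congr rfl fun σ _ => ?_
  rw [← Nat.card_eq_fintype_card,
    Nat.card_congr (Equiv.subtypeSubtypeEquivSubtypeInter
      (fun φ : Perm (Fin n) => φ * φ = 1 ∧ Big k φ) (fun φ => patternPerm hkn φ = σ))]
  apply card_iff
  intro φ
  rw [and_assoc, contains_iff hkn]

lemma bigE_eq (hkn : k ≤ n) (σ : Perm (Fin k)) :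
    Nat.card {φ : Perm (Fin n) // φ * φ = 1 ∧ Big k φ}
      = (Nat.factorial k) *
          Nat.card {φ : Perm (Fin n) // φ * φ = 1 ∧ Big k φ ∧ ContainsPattern φ σ} := by
  rw [bigE_partition hkn, Finset.sum_congr rfl (fun σ' _ => conj_card hkn σ' σ),
    Finset.sum_const, card_univ, Fintype.card_perm, Fintype.card_fin, smul_eq_mul]

lemma notBig_le (m : ℕ) (hkn : k ≤ m + 2) :
    Nat.card {φ : Perm (Fin (m + 2)) // φ * φ = 1 ∧ ¬ Big k φ}
      ≤ k * k * tInv (m + 1) := by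
  classical
  have hwit : ∀ φ : {φ : Perm (Fin (m + 2)) // φ * φ = 1 ∧ ¬ Big k φ},
      ∃ pq : Fin k × Fin k, φ.1 (Fin.castLE hkn pq.1) = Fin.castLE hkn pq.2 := by
    rintro ⟨φ, hinv, hnb⟩
    rw [Big] at hnb
    push_neg at hnb
    obtain ⟨x, hx, hφx⟩ := hnb
    refine ⟨(⟨(x : ℕ), hx⟩, ⟨(φ x : ℕ), hφx⟩), ?_⟩
    have hcx : Fin.castLE hkn ⟨(x : ℕ), hx⟩ = x := by apply Fin.ext; simp
    rw [hcx]
    apply Fin.ext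
    simp
  have hle : Nat.card {φ : Perm (Fin (m + 2)) // φ * φ = 1 ∧ ¬ Big k φ}
      ≤ Nat.card (Σ pq : Fin k × Fin k,
          {φ : Perm (Fin (m + 2)) // φ * φ = 1 ∧
            φ (Fin.castLE hkn pq.1) = Fin.castLE hkn pq.2}) := by
    apply Nat.card_le_card_of_injective
      (fun φ => ⟨Classical.choose (hwit φ), ⟨φ.1, φ.2.1, Classical.choose_spec (hwit φ)⟩⟩)
    intro a b hab
    have := congrArg (fun s : (Σ pq : Fin k × Fin k,
        {φ : Perm (Fin (m + 2)) // φ * φ = 1 ∧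
          φ (Fin.castLE hkn pq.1) = Fin.castLE hkn pq.2}) => (s.2 : Perm (Fin (m+2)))) hab
    exact Subtype.ext this
  refine hle.trans ?_
  rw [Nat.card_eq_fintype_card, Fintype.card_sigma]
  have hbound : ∀ pq : Fin k × Fin k,
      Fintype.card {φ : Perm (Fin (m + 2)) // φ * φ = 1 ∧
          φ (Fin.castLE hkn pq.1) = Fin.castLE hkn pq.2} ≤ tInv (m + 1) := by
    intro pq
    rw [← Nat.card_eq_fintype_card]
    by_cases hpq : Fin.castLE hkn pq.1 = Fin.castLE hkn pq.2
    · rw [← hpq, fix_fiber, J_ne]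
    · rw [swap_fiber _ _ hpq, J_ne_ne _ _ hpq]
      exact tInv_mono (by omega)
  calc ∑ pq : Fin k × Fin k, Fintype.card {φ : Perm (Fin (m + 2)) // φ * φ = 1 ∧
          φ (Fin.castLE hkn pq.1) = Fin.castLE hkn pq.2}
      ≤ ∑ _pq : Fin k × Fin k, tInv (m + 1) := Finset.sum_le_sum fun pq _ => hbound pq
    _ = k * k * tInv (m + 1) := by
        rw [Finset.sum_const, card_univ, Fintype.card_prod, Fintype.card_fin, smul_eq_mul]

lemma sqrt_nat_tendsto : Tendsto (fun n : ℕ => Real.sqrt n) atTop atTop := by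
  apply tendsto_atTop_atTop.mpr
  intro b
  refine ⟨⌈b ^ 2⌉₊, fun n hn => ?_⟩
  rcases le_or_gt b 0 with hb | hb
  · exact le_trans hb (Real.sqrt_nonneg _)
  · have h1 : b ^ 2 ≤ (n : ℝ) := le_trans (Nat.le_ceil _) (by exact_mod_cast hn)
    calc b = Real.sqrt (b ^ 2) := (Real.sqrt_sq hb.le).symm
      _ ≤ _ := Real.sqrt_le_sqrt h1


end IPP

open Equiv Finset IPP in
set_option maxHeartbeats 1000000 in
/-- For a fixed permutation `σ` of `[k]`, the probability that a random
involution of `[n]` contains `σ` as a subsequence tends to `1/k!` as `n → ∞`. -/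
theorem involution_pattern_prob (k : ℕ) (σ : Equiv.Perm (Fin k)) :
    Tendsto
      (fun n : ℕ =>
        (Nat.card {φ : Equiv.Perm (Fin n) // φ * φ = 1 ∧ ContainsPattern φ σ} : ℝ) /
          (tInv n : ℝ))
      atTop (nhds (1 / (Nat.factorial k : ℝ))) := by

  rw [← tendsto_sub_nhds_zero_iff]
  apply squeeze_zero_norm' (a := fun n : ℕ => (2 * (k * k : ℕ) : ℝ) / Real.sqrt n)
  · filter_upwards [eventually_ge_atTop (k + 2)] with n hn
    obtain ⟨m, rfl⟩ : ∃ m, n = m + 2 := ⟨n - 2, by omega⟩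
    have hkn : k ≤ m + 2 := by omega
    have hsplit : tInv (m + 2)
        = Nat.factorial k *
            Nat.card {φ : Perm (Fin (m+2)) // φ * φ = 1 ∧ Big k φ ∧ ContainsPattern φ σ}
          + Nat.card {φ : Perm (Fin (m+2)) // φ * φ = 1 ∧ ¬ Big k φ} := by
      rw [tInv, card_split (fun φ : Perm (Fin (m+2)) => φ * φ = 1) (Big k), bigE_eq hkn σ]
    have hNF : Nat.card {φ : Perm (Fin (m+2)) // φ * φ = 1 ∧ Big k φ ∧ ContainsPattern φ σ}
        ≤ Nat.card {φ : Perm (Fin (m+2)) // φ * φ = 1 ∧ ContainsPattern φ σ} :=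
      card_mono (fun φ h => ⟨h.1, h.2.2⟩)
    have hFN : Nat.card {φ : Perm (Fin (m+2)) // φ * φ = 1 ∧ ContainsPattern φ σ}
        ≤ Nat.card {φ : Perm (Fin (m+2)) // φ * φ = 1 ∧ Big k φ ∧ ContainsPattern φ σ}
          + Nat.card {φ : Perm (Fin (m+2)) // φ * φ = 1 ∧ ¬ Big k φ} := by
      rw [card_split (fun φ : Perm (Fin (m+2)) => φ * φ = 1 ∧ ContainsPattern φ σ) (Big k)]
      have e1 : Nat.card {φ : Perm (Fin (m+2)) // (φ * φ = 1 ∧ ContainsPattern φ σ) ∧ Big k φ}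
          = Nat.card {φ : Perm (Fin (m+2)) // φ * φ = 1 ∧ Big k φ ∧ ContainsPattern φ σ} :=
        card_iff (fun φ => by tauto)
      have e2 : Nat.card {φ : Perm (Fin (m+2)) // (φ * φ = 1 ∧ ContainsPattern φ σ) ∧ ¬ Big k φ}
          ≤ Nat.card {φ : Perm (Fin (m+2)) // φ * φ = 1 ∧ ¬ Big k φ} :=
        card_mono (fun φ h => ⟨h.1.1, h.2⟩)
      omega
    have hNBn := notBig_le m hkn
    -- real versions
    set F : ℝ := (Nat.card {φ : Perm (Fin (m+2)) // φ * φ = 1 ∧ ContainsPattern φ σ} : ℝ)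
      with hF0
    set N : ℝ :=
      (Nat.card {φ : Perm (Fin (m+2)) // φ * φ = 1 ∧ Big k φ ∧ ContainsPattern φ σ} : ℝ)
      with hN0
    set NB : ℝ := (Nat.card {φ : Perm (Fin (m+2)) // φ * φ = 1 ∧ ¬ Big k φ} : ℝ) with hNB0
    set T : ℝ := (tInv (m + 2) : ℝ) with hT0
    set K : ℝ := (Nat.factorial k : ℝ) with hK0
    set t1 : ℝ := (tInv (m + 1) : ℝ) with ht10
    set kk : ℝ := ((k * k : ℕ) : ℝ) with hkk0
    have hsplitR : T = K * N + NB := by rw [hT0, hN0, hNB0, hK0, hsplit]; push_cast; ring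
    have hNFR : N ≤ F := by rw [hN0, hF0]; exact_mod_cast hNF
    have hFNR : F ≤ N + NB := by rw [hF0, hN0, hNB0]; exact_mod_cast hFN
    have hNBR : NB ≤ kk * t1 := by rw [hNB0, hkk0, ht10]; exact_mod_cast hNBn
    have hK1 : (1 : ℝ) ≤ K := by
      rw [hK0]; exact_mod_cast Nat.one_le_iff_ne_zero.mpr (Nat.factorial_ne_zero k)
    have hT0' : (0 : ℝ) < T := by rw [hT0]; exact_mod_cast tInv_pos (m + 2)
    have ht1' : (0 : ℝ) ≤ t1 := by rw [ht10]; positivity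
    have hNB0' : (0 : ℝ) ≤ NB := by rw [hNB0]; positivity
    have hN0' : (0 : ℝ) ≤ N := by rw [hN0]; positivity
    have hkk0' : (0 : ℝ) ≤ kk := by rw [hkk0]; positivity
    have hsq : Real.sqrt ((m : ℝ) + 2) * t1 ≤ 2 * T := by
      have h := sqrt_bound (m + 1)
      have h2 : ((m + 1 : ℕ) : ℝ) + 1 = (m : ℝ) + 2 := by push_cast; ring
      rw [h2] at h
      rw [ht10, hT0]
      exact_mod_cast h
    set s : ℝ := Real.sqrt ((m : ℝ) + 2) with hs0
    have hs' : (0 : ℝ) < s := Real.sqrt_pos.mpr (by positivity)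
    have habs : |K * F - T| ≤ K * NB := by
      rw [abs_le]
      constructor
      · -- T - K*F ≤ K*NB
        nlinarith [mul_le_mul_of_nonneg_left hNFR (le_trans zero_le_one hK1)]
      · nlinarith [mul_le_mul_of_nonneg_left hFNR (le_trans zero_le_one hK1)]
    have hcast : ((m + 2 : ℕ) : ℝ) = (m : ℝ) + 2 := by push_cast; ring
    show ‖F / T - 1 / K‖ ≤ 2 * kk / Real.sqrt ((m + 2 : ℕ) : ℝ)
    rw [hcast, ← hs0]
    have hrw : F / T - 1 / K = (K * F - T) / (K * T) := by
      field_simp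
    rw [Real.norm_eq_abs, hrw, abs_div, abs_of_pos (by positivity : (0:ℝ) < K * T)]
    calc |K * F - T| / (K * T) ≤ (K * NB) / (K * T) := by gcongr
      _ = NB / T := by rw [mul_div_mul_left _ _ (by linarith : K ≠ 0)]
      _ ≤ (kk * t1) / T := by gcongr
      _ ≤ 2 * kk / s := by
          rw [div_le_div_iff₀ hT0' hs']
          nlinarith [mul_le_mul_of_nonneg_left hsq hkk0']
  · exact Filter.Tendsto.div_atTop tendsto_const_nhds sqrt_nat_tendsto
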